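/- Let V be a 4-dimensional ℂ-vector space and let f be an endomorphism of V whose matrix in some basis of V is the block-diagonal Jordan matrix diag(J(1,2), J(1,1), J(1,1)). Then there is a basis of the 6-dimensional space ⋀²V in which the induced endomorphism ⋀²f has matrix diag(J(1,2), J(1,2), J(1,1), J(1,1)). -/

import Mathlib

/-- The `n × n` Jordan block with eigenvalue `lam`: every diagonal entry is `lam` and every
entry directly above the diagonal is `1`. -/
def jordanBlock (lam : ℂ) (n : ℕ) : Matrix (Fin n) (Fin n) ℂ :=
  Matrix.of fun i j : Fin n =>
    if (j : ℕ) = (i : ℕ) then lam else if (j : ℕ) = (i : ℕ) + 1 then 1 else 0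

/-- The wedge `v ∧ w` as an element of the second exterior power `⋀[ℂ]^2 V`. -/
def wedge {V : Type*} [AddCommGroup V] [Module ℂ V] (v w : V) : ⋀[ℂ]^2 V :=
  ⟨ExteriorAlgebra.ι ℂ v * ExteriorAlgebra.ι ℂ w, by
    show _ ∈ LinearMap.range (ExteriorAlgebra.ι ℂ (M := V)) ^ 2
    rw [pow_two]
    exact Submodule.mul_mem_mul (LinearMap.mem_range_self _ v) (LinearMap.mem_range_self _ w)⟩

section aux
variable {V : Type*} [AddCommGroup V] [Module ℂ V]

lemma wedge_add_left (v v' w : V) : wedge (v + v') w = wedge v w + wedge v' w := by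
  ext; simp [wedge, add_mul]

lemma wedge_add_right (v w w' : V) : wedge v (w + w') = wedge v w + wedge v w' := by
  ext; simp [wedge, mul_add]

lemma wedge_smul_left (a : ℂ) (v w : V) : wedge (a • v) w = a • wedge v w := by
  ext; simp [wedge, smul_mul_assoc]

lemma wedge_smul_right (a : ℂ) (v w : V) : wedge v (a • w) = a • wedge v w := by
  ext; simp [wedge, mul_smul_comm]

lemma wedge_self (v : V) : wedge v v = 0 := by
  ext; simp [wedge, ExteriorAlgebra.ι_sq_zero]

lemma wedge_antisymm (v w : V) : wedge w v = - wedge v w := by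
  ext
  have := ExteriorAlgebra.ι_add_mul_swap (R := ℂ) v w
  simp only [wedge, Submodule.coe_neg]
  exact eq_neg_of_add_eq_zero_left (by linear_combination (norm := noncomm_ring) this)

noncomputable def pairMap (φ ψ : V →ₗ[ℂ] ℂ) : V [⋀^Fin 2]→ₗ[ℂ] ℂ where
  toMultilinearMap := (MultilinearMap.mkPiAlgebra ℂ (Fin 2) ℂ).compLinearMap ![φ, ψ]
    - (MultilinearMap.mkPiAlgebra ℂ (Fin 2) ℂ).compLinearMap ![ψ, φ]
  map_eq_zero_of_eq' := by
    intro v i j hv hij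
    fin_cases i <;> fin_cases j <;> simp_all [Fin.prod_univ_two] <;> ring

lemma pairMap_apply (φ ψ : V →ₗ[ℂ] ℂ) (v w : V) :
    pairMap φ ψ ![v, w] = φ v * ψ w - φ w * ψ v := by
  show ((MultilinearMap.mkPiAlgebra ℂ (Fin 2) ℂ).compLinearMap ![φ, ψ]
    - (MultilinearMap.mkPiAlgebra ℂ (Fin 2) ℂ).compLinearMap ![ψ, φ]) ![v, w] = _
  simp [Fin.prod_univ_two]
  ring

noncomputable def pfam (φ ψ : V →ₗ[ℂ] ℂ) : ∀ i : ℕ, V [⋀^Fin i]→ₗ[ℂ] ℂ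
  | 2 => pairMap φ ψ
  | _ => 0

noncomputable def pf (φ ψ : V →ₗ[ℂ] ℂ) : (⋀[ℂ]^2 V) →ₗ[ℂ] ℂ :=
  (ExteriorAlgebra.liftAlternating (pfam φ ψ)) ∘ₗ (Submodule.subtype _)

lemma wedge_val (v w : V) :
    (ExteriorAlgebra.ι ℂ v * ExteriorAlgebra.ι ℂ w) = ExteriorAlgebra.ιMulti ℂ 2 ![v, w] := by
  simp [ExteriorAlgebra.ιMulti_apply]

lemma pf_wedge (φ ψ : V →ₗ[ℂ] ℂ) (v w : V) :
    pf φ ψ (wedge v w) = φ v * ψ w - φ w * ψ v := by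
  show ExteriorAlgebra.liftAlternating (pfam φ ψ) (ExteriorAlgebra.ι ℂ v * ExteriorAlgebra.ι ℂ w) = _
  rw [wedge_val, ExteriorAlgebra.liftAlternating_apply_ιMulti]
  exact pairMap_apply φ ψ v w

end aux

set_option maxHeartbeats 1000000 in
/-- If the matrix of the endomorphism `f` of the 4-dimensional ℂ-vector space `V` in some basis is diag(J(1,2), J(1,1), J(1,1)), then in some basis of the 6-dimensional space ⋀²V the induced endomorphism ⋀²f (characterized by `v ∧ w ↦ f v ∧ f w`) has matrix diag(J(1,2), J(1,2), J(1,1), J(1,1)). -/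
theorem exterior_square_jordan_J2_J1_J1 (V : Type*) [AddCommGroup V] [Module ℂ V]
    (hdim : Module.finrank ℂ V = 4)
    (f : V →ₗ[ℂ] V)
    (B : Module.Basis (Fin 2 ⊕ (Fin 1 ⊕ Fin 1)) ℂ V)
    (hB : LinearMap.toMatrix B B f = Matrix.fromBlocks (jordanBlock 1 2) 0 0 (Matrix.fromBlocks (jordanBlock 1 1) 0 0 (jordanBlock 1 1)))
    (g : (⋀[ℂ]^2 V) →ₗ[ℂ] (⋀[ℂ]^2 V))
    (hg : ∀ v w : V, g (wedge v w) = wedge (f v) (f w)) :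
    ∃ C : Module.Basis (Fin 2 ⊕ (Fin 2 ⊕ (Fin 1 ⊕ Fin 1))) ℂ (⋀[ℂ]^2 V),
      LinearMap.toMatrix C C g = Matrix.fromBlocks (jordanBlock 1 2) 0 0 (Matrix.fromBlocks (jordanBlock 1 2) 0 0 (Matrix.fromBlocks (jordanBlock 1 1) 0 0 (jordanBlock 1 1))) := by
  classical
  set e1 : V := B (Sum.inl 0) with he1
  set e2 : V := B (Sum.inl 1) with he2
  set e3 : V := B (Sum.inr (Sum.inl 0)) with he3
  set e4 : V := B (Sum.inr (Sum.inr 0)) with he4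
  have hf : f = Matrix.toLin B B (Matrix.fromBlocks (jordanBlock 1 2) 0 0
      (Matrix.fromBlocks (jordanBlock 1 1) 0 0 (jordanBlock 1 1))) := by
    rw [← hB, Matrix.toLin_toMatrix]
  have hf1 : f e1 = e1 := by
    rw [hf, he1, Matrix.toLin_self]
    simp [Fintype.sum_sum_type, jordanBlock, Matrix.fromBlocks, Fin.sum_univ_two]
  have hf2 : f e2 = e1 + e2 := by
    rw [hf, he2, Matrix.toLin_self]
    simp [he1, Fintype.sum_sum_type, jordanBlock, Matrix.fromBlocks, Fin.sum_univ_two]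
  have hf3 : f e3 = e3 := by
    rw [hf, he3, Matrix.toLin_self]
    simp [Fintype.sum_sum_type, jordanBlock, Matrix.fromBlocks, Fin.sum_univ_two]
  have hf4 : f e4 = e4 := by
    rw [hf, he4, Matrix.toLin_self]
    simp [Fintype.sum_sum_type, jordanBlock, Matrix.fromBlocks, Fin.sum_univ_two]
  -- the candidate basis vectors
  set c : (Fin 2 ⊕ (Fin 2 ⊕ (Fin 1 ⊕ Fin 1))) → ⋀[ℂ]^2 V :=
    Sum.elim ![wedge e1 e3, wedge e2 e3]
      (Sum.elim ![wedge e1 e4, wedge e2 e4] (Sum.elim ![wedge e1 e2] ![wedge e3 e4])) with hc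
  -- values of the coordinate functionals on basis wedges
  have hP : ∀ i j k l : Fin 2 ⊕ (Fin 1 ⊕ Fin 1),
      pf (B.coord i) (B.coord j) (wedge (B k) (B l)) =
        ((if i = k then 1 else 0) * (if j = l then 1 else 0)
          - (if i = l then 1 else 0) * (if j = k then 1 else 0) : ℂ) := by
    intro i j k l
    rw [pf_wedge]
    simp [Module.Basis.coord_apply, Module.Basis.repr_self, Finsupp.single_apply, eq_comm]
  -- linear independence
  have hli : LinearIndependent ℂ c := by
    rw [Fintype.linearIndependent_iff]
    intro a ha
    have hz : ∀ i j : Fin 2 ⊕ (Fin 1 ⊕ Fin 1),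
        ∑ m, a m * pf (B.coord i) (B.coord j) (c m) = 0 := by
      intro i j
      have := congrArg (pf (B.coord i) (B.coord j)) ha
      simpa [map_sum] using this
    intro m
    have h13 := hz (Sum.inl 0) (Sum.inr (Sum.inl 0))
    have h23 := hz (Sum.inl 1) (Sum.inr (Sum.inl 0))
    have h14 := hz (Sum.inl 0) (Sum.inr (Sum.inr 0))
    have h24 := hz (Sum.inl 1) (Sum.inr (Sum.inr 0))
    have h12 := hz (Sum.inl 0) (Sum.inl 1)
    have h34 := hz (Sum.inr (Sum.inl 0)) (Sum.inr (Sum.inr 0))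
    simp only [hc, Fintype.sum_sum_type, Fin.sum_univ_two, Fin.sum_univ_one, Sum.elim_inl,
      Sum.elim_inr, Matrix.cons_val_zero, Matrix.cons_val_one, Matrix.head_cons,
      he1, he2, he3, he4, hP] at h13 h23 h14 h24 h12 h34
    simp only [Sum.inl.injEq, Sum.inr.injEq, Fin.reduceEq, eq_self_iff_true, reduceCtorEq, if_false, if_true, sub_zero, zero_sub, mul_one, mul_zero, zero_mul, one_mul, add_zero, zero_add, neg_zero, mul_neg, neg_neg] at h13 h23 h14 h24 h12 h34
    rcases m with m | m | m | m <;> fin_cases m <;> assumption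
  -- spanning
  have hspan : ⊤ ≤ Submodule.span ℂ (Set.range c) := by
    have hgen : ∀ k l : Fin 2 ⊕ (Fin 1 ⊕ Fin 1),
        ExteriorAlgebra.ι ℂ (B k) * ExteriorAlgebra.ι ℂ (B l) ∈
          Submodule.span ℂ ((⋀[ℂ]^2 V).subtype '' Set.range c) := by
      have mem : ∀ m, ((c m : ⋀[ℂ]^2 V) : ExteriorAlgebra ℂ V) ∈
          Submodule.span ℂ ((⋀[ℂ]^2 V).subtype '' Set.range c) :=
        fun m => Submodule.subset_span ⟨c m, ⟨m, rfl⟩, rfl⟩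
      have swap : ∀ v w : V, ExteriorAlgebra.ι ℂ w * ExteriorAlgebra.ι ℂ v
          = -(ExteriorAlgebra.ι ℂ v * ExteriorAlgebra.ι ℂ w) := fun v w =>
        eq_neg_of_add_eq_zero_right (ExteriorAlgebra.ι_add_mul_swap v w)
      intro k l
      rcases k with k | k | k <;> rcases l with l | l | l <;> fin_cases k <;> fin_cases l
      · rw [ExteriorAlgebra.ι_sq_zero]; exact Submodule.zero_mem _
      · exact mem (Sum.inr (Sum.inr (Sum.inl 0)))
      · rw [swap]; exact Submodule.neg_mem _ (mem (Sum.inr (Sum.inr (Sum.inl 0))))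
      · rw [ExteriorAlgebra.ι_sq_zero]; exact Submodule.zero_mem _
      · exact mem (Sum.inl 0)
      · exact mem (Sum.inl 1)
      · exact mem (Sum.inr (Sum.inl 0))
      · exact mem (Sum.inr (Sum.inl 1))
      · rw [swap]; exact Submodule.neg_mem _ (mem (Sum.inl 0))
      · rw [swap]; exact Submodule.neg_mem _ (mem (Sum.inl 1))
      · rw [ExteriorAlgebra.ι_sq_zero]; exact Submodule.zero_mem _
      · exact mem (Sum.inr (Sum.inr (Sum.inr 0)))
      · rw [swap]; exact Submodule.neg_mem _ (mem (Sum.inr (Sum.inl 0)))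
      · rw [swap]; exact Submodule.neg_mem _ (mem (Sum.inr (Sum.inl 1)))
      · rw [swap]; exact Submodule.neg_mem _ (mem (Sum.inr (Sum.inr (Sum.inr 0))))
      · rw [ExteriorAlgebra.ι_sq_zero]; exact Submodule.zero_mem _
    have hmap : Submodule.map (Submodule.subtype _) (Submodule.span ℂ (Set.range c))
        = ⋀[ℂ]^2 V := by
      rw [Submodule.map_span]
      refine le_antisymm (Submodule.span_le.2 ?_) ?_
      · rintro x ⟨y, -, rfl⟩; exact y.2
      · show (LinearMap.range (ExteriorAlgebra.ι ℂ (M := V)))^2 ≤ _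
        rw [pow_two]
        refine Submodule.mul_le.2 ?_
        rintro x ⟨v, rfl⟩ y ⟨w, rfl⟩
        rw [← B.sum_repr v, ← B.sum_repr w, map_sum, map_sum, Finset.sum_mul_sum]
        refine Submodule.sum_mem _ fun k _ => Submodule.sum_mem _ fun l _ => ?_
        rw [map_smul, map_smul, smul_mul_smul_comm]
        exact Submodule.smul_mem _ _ (hgen k l)
    have heq : Submodule.span ℂ (Set.range c) = ⊤ := by
      apply Submodule.map_injective_of_injective (Submodule.injective_subtype (⋀[ℂ]^2 V))
      rw [hmap, Submodule.map_subtype_top]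
    exact heq.ge
  refine ⟨Module.Basis.mk hli hspan, ?_⟩
  have hrep : ∀ m, (Module.Basis.mk hli hspan).repr (c m) = Finsupp.single m 1 := fun m => by
    rw [← Module.Basis.mk_apply hli hspan m]; exact (Module.Basis.mk hli hspan).repr_self m
  have hg13 : g (c (Sum.inl 0)) = c (Sum.inl 0) := by
    show g (wedge e1 e3) = wedge e1 e3
    rw [hg, hf1, hf3]
  have hg23 : g (c (Sum.inl 1)) = c (Sum.inl 0) + c (Sum.inl 1) := by
    show g (wedge e2 e3) = wedge e1 e3 + wedge e2 e3
    rw [hg, hf2, hf3, wedge_add_left]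
  have hg14 : g (c (Sum.inr (Sum.inl 0))) = c (Sum.inr (Sum.inl 0)) := by
    show g (wedge e1 e4) = wedge e1 e4
    rw [hg, hf1, hf4]
  have hg24 : g (c (Sum.inr (Sum.inl 1))) = c (Sum.inr (Sum.inl 0)) + c (Sum.inr (Sum.inl 1)) := by
    show g (wedge e2 e4) = wedge e1 e4 + wedge e2 e4
    rw [hg, hf2, hf4, wedge_add_left]
  have hg12 : g (c (Sum.inr (Sum.inr (Sum.inl 0)))) = c (Sum.inr (Sum.inr (Sum.inl 0))) := by
    show g (wedge e1 e2) = wedge e1 e2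
    rw [hg, hf1, hf2, wedge_add_right, wedge_self, zero_add]
  have hg34 : g (c (Sum.inr (Sum.inr (Sum.inr 0)))) = c (Sum.inr (Sum.inr (Sum.inr 0))) := by
    show g (wedge e3 e4) = wedge e3 e4
    rw [hg, hf3, hf4]
  ext i j
  rw [LinearMap.toMatrix_apply, Module.Basis.mk_apply]
  have hfin : ∀ m i : Fin 2 ⊕ (Fin 2 ⊕ (Fin 1 ⊕ Fin 1)),
      (Finsupp.single m (1:ℂ)) i = if m = i then 1 else 0 := fun m i => Finsupp.single_apply
  rcases j with j | j | j | j <;> fin_cases j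
  · simp only [Fin.isValue, Fin.mk_zero, Fin.mk_one]
    rw [hg13, hrep]
    rcases i with i | i | i | i <;> fin_cases i <;>
      simp [hfin, Matrix.fromBlocks, jordanBlock]
  · simp only [Fin.isValue, Fin.mk_zero, Fin.mk_one]
    rw [hg23, map_add, hrep, hrep]
    rcases i with i | i | i | i <;> fin_cases i <;>
      simp [hfin, Matrix.fromBlocks, jordanBlock]
  · simp only [Fin.isValue, Fin.mk_zero, Fin.mk_one]
    rw [hg14, hrep]
    rcases i with i | i | i | i <;> fin_cases i <;>
      simp [hfin, Matrix.fromBlocks, jordanBlock]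
  · simp only [Fin.isValue, Fin.mk_zero, Fin.mk_one]
    rw [hg24, map_add, hrep, hrep]
    rcases i with i | i | i | i <;> fin_cases i <;>
      simp [hfin, Matrix.fromBlocks, jordanBlock]
  · simp only [Fin.isValue, Fin.mk_zero, Fin.mk_one]
    rw [hg12, hrep]
    rcases i with i | i | i | i <;> fin_cases i <;>
      simp [hfin, Matrix.fromBlocks, jordanBlock]
  · simp only [Fin.isValue, Fin.mk_zero, Fin.mk_one]
    rw [hg34, hrep]
    rcases i with i | i | i | i <;> fin_cases i <;>
      simp [hfin, Matrix.fromBlocks, jordanBlock]
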